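/- (Commutant-triviality content of Theorem 2.) Let N ≥ 1 and d_1,…,d_N be positive integers, let H be a Hermitian matrix on ℂ^{d_1} ⊗ ⋯ ⊗ ℂ^{d_N}, and let {B_i}_{i∈I} be a finite family of matrices on the same space. Suppose there exist, for each j ∈ {1,…,N}, complex coefficients α_{0,j} and (α_{i,j}, β_{i,j})_{i∈I} defining M_j = α_{0,j}·H + Σ_{i∈I} (α_{i,j}·B_i + β_{i,j}·B_i†), and a single unitary matrix U on ℂ^{d_1} ⊗ ⋯ ⊗ ℂ^{d_N} such that for every j: U·M_j·U† = B̄^{(N)}_j or U·M_j·U† = (B̄^{(N)}_j)†, where B̄^{(N)}_j = 1 ⊗ ⋯ ⊗ B̄_j ⊗ ⋯ ⊗ 1 acts as a ladder matrix B̄_j ∈ M_{d_j}(ℂ) (all subdiagonal entries nonzero) on the j-th factor and as the identity on all other factors. Then every matrix X that commutes with H, with every B_i, and with every B_i† is a scalar multiple of the identity: X = λ·1 for some λ ∈ ℂ. -/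

import Mathlib

open Matrix

/-- A *ladder matrix* `B̄ ∈ M_d(ℂ)`: all entries vanish except the
subdiagonal ones `B̄_{k+1,k}`, all of which are nonzero. -/
def IsLadder {d : ℕ} (B : Matrix (Fin d) (Fin d) ℂ) : Prop :=
  (∀ i j : Fin d, (i : ℕ) ≠ (j : ℕ) + 1 → B i j = 0) ∧
  ∀ (j : Fin d) (h : (j : ℕ) + 1 < d), B ⟨(j : ℕ) + 1, h⟩ j ≠ 0

lemma sum_single' {ι : Type*} [Fintype ι] (f : ι → ℂ) (p : ι)
    (h : ∀ z, z ≠ p → f z = 0) : ∑ z, f z = f p := by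
  classical
  exact Finset.sum_eq_single p (fun z _ hz => h z hz)
    (fun hc => absurd (Finset.mem_univ p) hc)

lemma ladder_commutant {d : ℕ} (L : Matrix (Fin d) (Fin d) ℂ) (hL : IsLadder L)
    (A : Matrix (Fin d) (Fin d) ℂ) (h1 : A * L = L * A) (h2 : A * Lᴴ = Lᴴ * A) :
    ∃ c : ℂ, A = c • (1 : Matrix (Fin d) (Fin d) ℂ) := by
  rcases Nat.eq_zero_or_pos d with hd | hd
  · exact ⟨0, by subst hd; ext i; exact i.elim0⟩
  have rel1 : ∀ i j : Fin d,
      (if h : (j : ℕ) + 1 < d then A i ⟨(j:ℕ)+1, h⟩ * L ⟨(j:ℕ)+1, h⟩ j else 0)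
      = (if h : 0 < (i : ℕ) then L i ⟨(i:ℕ)-1, by have := i.2; omega⟩ * A ⟨(i:ℕ)-1, by have := i.2; omega⟩ j else 0) := by
    intro i j
    have h := congrFun (congrFun h1 i) j
    rw [Matrix.mul_apply, Matrix.mul_apply] at h
    have lhs : ∑ z, A i z * L z j = if h : (j : ℕ) + 1 < d then
        A i ⟨(j:ℕ)+1, h⟩ * L ⟨(j:ℕ)+1, h⟩ j else 0 := by
      by_cases hj : (j : ℕ) + 1 < d
      · rw [dif_pos hj, sum_single' (fun z => A i z * L z j) ⟨(j:ℕ)+1, hj⟩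
          (fun z hz => by
            show A i z * L z j = 0
            rw [hL.1 z j (fun hc => hz (Fin.ext hc)), mul_zero])]
      · rw [dif_neg hj]
        exact Finset.sum_eq_zero fun z _ => by
          rw [hL.1 z j (by have := z.2; omega), mul_zero]
    have rhs : ∑ z, L i z * A z j = if h : 0 < (i : ℕ) then
        L i ⟨(i:ℕ)-1, by have := i.2; omega⟩ * A ⟨(i:ℕ)-1, by have := i.2; omega⟩ j else 0 := by
      by_cases hi : 0 < (i : ℕ)
      · rw [dif_pos hi, sum_single' (fun z => L i z * A z j) ⟨(i:ℕ)-1, by have := i.2; omega⟩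
          (fun z hz => by
            show L i z * A z j = 0
            rw [hL.1 i z (fun hc => hz (Fin.ext (show (z:ℕ) = (i:ℕ)-1 by omega))), zero_mul])]
      · rw [dif_neg hi]
        exact Finset.sum_eq_zero fun z _ => by
          rw [hL.1 i z (by omega), zero_mul]
    rw [lhs, rhs] at h
    exact h
  have rel2 : ∀ i j : Fin d,
      (if h : 0 < (j : ℕ) then
        A i ⟨(j:ℕ)-1, by have := j.2; omega⟩ * star (L j ⟨(j:ℕ)-1, by have := j.2; omega⟩) else 0)
      = (if h : (i : ℕ) + 1 < d then
        star (L ⟨(i:ℕ)+1, h⟩ i) * A ⟨(i:ℕ)+1, h⟩ j else 0) := by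
    intro i j
    have h := congrFun (congrFun h2 i) j
    rw [Matrix.mul_apply, Matrix.mul_apply] at h
    have lhs : ∑ z, A i z * Lᴴ z j = if h : 0 < (j : ℕ) then
        A i ⟨(j:ℕ)-1, by have := j.2; omega⟩ * star (L j ⟨(j:ℕ)-1, by have := j.2; omega⟩) else 0 := by
      by_cases hj : 0 < (j : ℕ)
      · rw [dif_pos hj, sum_single' (fun z => A i z * Lᴴ z j) ⟨(j:ℕ)-1, by have := j.2; omega⟩
          (fun z hz => by
            show A i z * Lᴴ z j = 0
            rw [Matrix.conjTranspose_apply,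
              hL.1 j z (fun hc => hz (Fin.ext (show (z:ℕ) = (j:ℕ)-1 by omega)))]
            simp)]
        rw [Matrix.conjTranspose_apply]
      · rw [dif_neg hj]
        exact Finset.sum_eq_zero fun z _ => by
          rw [Matrix.conjTranspose_apply, hL.1 j z (by omega)]; simp
    have rhs : ∑ z, Lᴴ i z * A z j = if h : (i : ℕ) + 1 < d then
        star (L ⟨(i:ℕ)+1, h⟩ i) * A ⟨(i:ℕ)+1, h⟩ j else 0 := by
      by_cases hi : (i : ℕ) + 1 < d
      · rw [dif_pos hi, sum_single' (fun z => Lᴴ i z * A z j) ⟨(i:ℕ)+1, hi⟩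
          (fun z hz => by
            show Lᴴ i z * A z j = 0
            rw [Matrix.conjTranspose_apply, hL.1 z i (fun hc => hz (Fin.ext hc))]
            simp)]
        rw [Matrix.conjTranspose_apply]
      · rw [dif_neg hi]
        exact Finset.sum_eq_zero fun z _ => by
          rw [Matrix.conjTranspose_apply, hL.1 z i (by have := z.2; omega)]; simp
    rw [lhs, rhs] at h
    exact h
  have star_ne : ∀ (m : ℕ) (hm : m + 1 < d), star (L ⟨m+1, hm⟩ ⟨m, by omega⟩) ≠ 0 := by
    intro m hm
    simpa using hL.2 ⟨m, by omega⟩ hm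
  -- upper part vanishes
  have up : ∀ x : ℕ, ∀ (hx : x < d) (y : Fin d), x < (y : ℕ) → A ⟨x, hx⟩ y = 0 := by
    intro x
    induction x with
    | zero =>
      intro hx y hy
      obtain ⟨yv, hyv⟩ := y
      simp only at hy
      obtain ⟨m, rfl⟩ : ∃ m, yv = m + 1 := ⟨yv - 1, by omega⟩
      have h := rel1 ⟨0, hx⟩ ⟨m, by omega⟩
      rw [dif_pos (show m + 1 < d from hyv), dif_neg (show ¬ (0:ℕ) < 0 by omega)] at h
      exact (mul_eq_zero.mp h).resolve_right (hL.2 ⟨m, by omega⟩ hyv)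
    | succ n ih =>
      intro hx y hy
      obtain ⟨yv, hyv⟩ := y
      simp only at hy
      obtain ⟨m, rfl⟩ : ∃ m, yv = m + 1 := ⟨yv - 1, by omega⟩
      have h := rel1 ⟨n+1, hx⟩ ⟨m, by omega⟩
      rw [dif_pos (show m + 1 < d from hyv), dif_pos (show 0 < n+1 by omega)] at h
      replace h : A ⟨n+1, hx⟩ ⟨m+1, hyv⟩ * L ⟨m+1, hyv⟩ ⟨m, by omega⟩
          = L ⟨n+1, hx⟩ ⟨n, by omega⟩ * A ⟨n, by omega⟩ ⟨m, by omega⟩ := h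
      rw [ih (by omega) ⟨m, by omega⟩ (show n < m by omega), mul_zero] at h
      exact (mul_eq_zero.mp h).resolve_right (hL.2 ⟨m, by omega⟩ hyv)
  -- lower part vanishes
  have down : ∀ y : ℕ, ∀ (hy : y < d) (x : Fin d), y < (x : ℕ) → A x ⟨y, hy⟩ = 0 := by
    intro y
    induction y with
    | zero =>
      intro hy x hx
      obtain ⟨xv, hxv⟩ := x
      simp only at hx
      obtain ⟨m, rfl⟩ : ∃ m, xv = m + 1 := ⟨xv - 1, by omega⟩
      have h := rel2 ⟨m, by omega⟩ ⟨0, hy⟩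
      rw [dif_neg (show ¬ (0:ℕ) < 0 by omega), dif_pos (show m + 1 < d from hxv)] at h
      exact (mul_eq_zero.mp h.symm).resolve_left (star_ne m hxv)
    | succ n ih =>
      intro hy x hx
      obtain ⟨xv, hxv⟩ := x
      simp only at hx
      obtain ⟨m, rfl⟩ : ∃ m, xv = m + 1 := ⟨xv - 1, by omega⟩
      have h := rel2 ⟨m, by omega⟩ ⟨n+1, hy⟩
      rw [dif_pos (show 0 < n+1 by omega), dif_pos (show m + 1 < d from hxv)] at h
      replace h : A ⟨m, by omega⟩ ⟨n, by omega⟩ * star (L ⟨n+1, hy⟩ ⟨n, by omega⟩)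
          = star (L ⟨m+1, hxv⟩ ⟨m, by omega⟩) * A ⟨m+1, hxv⟩ ⟨n+1, hy⟩ := h
      rw [ih (by omega) ⟨m, by omega⟩ (show n < m by omega), zero_mul] at h
      exact (mul_eq_zero.mp h.symm).resolve_left (star_ne m hxv)
  -- diagonal constant
  have diag : ∀ x : ℕ, ∀ (hx : x < d), A ⟨x, hx⟩ ⟨x, hx⟩ = A ⟨0, hd⟩ ⟨0, hd⟩ := by
    intro x
    induction x with
    | zero => intro hx; rfl
    | succ n ih =>
      intro hx
      have h := rel1 ⟨n+1, hx⟩ ⟨n, by omega⟩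
      rw [dif_pos (show ((⟨n, by omega⟩ : Fin d) : ℕ) + 1 < d from hx),
        dif_pos (show 0 < n+1 by omega)] at h
      replace h : A ⟨n+1, hx⟩ ⟨n+1, hx⟩ * L ⟨n+1, hx⟩ ⟨n, by omega⟩
          = L ⟨n+1, hx⟩ ⟨n, by omega⟩ * A ⟨n, by omega⟩ ⟨n, by omega⟩ := h
      rw [mul_comm (L ⟨n+1, hx⟩ ⟨n, by omega⟩)] at h
      have h2 := mul_right_cancel₀ (hL.2 ⟨n, by omega⟩ hx) h
      rw [show A ⟨n+1, hx⟩ ⟨n+1, hx⟩ = A ⟨n, by omega⟩ ⟨n, by omega⟩ from h2, ih (by omega)]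
  refine ⟨A ⟨0, hd⟩ ⟨0, hd⟩, ?_⟩
  ext i j
  rw [Matrix.smul_apply, Matrix.one_apply]
  by_cases hij : i = j
  · subst hij
    rw [if_pos rfl, smul_eq_mul, mul_one]
    have := diag i.1 i.2
    simpa using this
  · rw [if_neg hij, smul_eq_mul, mul_zero]
    rcases lt_or_gt_of_ne (fun hc : (i:ℕ) = (j:ℕ) => hij (Fin.ext hc)) with hlt | hgt
    · have := up i.1 i.2 j hlt
      simpa using this
    · have := down j.1 j.2 i hgt
      simpa using this

section
variable {N : ℕ} {d : Fin N → ℕ}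

lemma big_sum_right (j : Fin N) (c : Matrix (Fin (d j)) (Fin (d j)) ℂ)
    (C : Matrix ((i : Fin N) → Fin (d i)) ((i : Fin N) → Fin (d i)) ℂ)
    (hC : ∀ x y, C x y = c (x j) (y j) *
      ∏ i ∈ Finset.univ.erase j, (if x i = y i then (1:ℂ) else 0))
    (g : ((i : Fin N) → Fin (d i)) → ℂ) (y' : (i : Fin N) → Fin (d i)) :
    ∑ w, g w * C w y' = ∑ z, g (Function.update y' j z) * c z (y' j) := by
  classical
  have hinj : Function.Injective (fun z : Fin (d j) => Function.update y' j z) := by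
    intro z1 z2 h
    have := congrFun h j
    simpa using this
  have himg : ∑ w ∈ Finset.univ.image (fun z : Fin (d j) => Function.update y' j z),
      g w * C w y' = ∑ z, g (Function.update y' j z) * C (Function.update y' j z) y' :=
    Finset.sum_image (fun z1 _ z2 _ h => hinj h)
  have hout : ∀ w ∈ (Finset.univ : Finset ((i : Fin N) → Fin (d i))),
      w ∉ Finset.univ.image (fun z : Fin (d j) => Function.update y' j z) →
      g w * C w y' = 0 := by
    intro w _ hw
    have : ∃ i, i ≠ j ∧ w i ≠ y' i := by
      by_contra hc
      push_neg at hc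
      exact hw (Finset.mem_image.mpr ⟨w j, Finset.mem_univ _, by
        funext i
        by_cases hij : i = j
        · subst hij; simp
        · rw [Function.update_of_ne hij]; exact (hc i hij).symm⟩)
    obtain ⟨i, hij, hi⟩ := this
    have hz : (∏ i ∈ Finset.univ.erase j, if w i = y' i then (1:ℂ) else 0) = 0 :=
      Finset.prod_eq_zero (Finset.mem_erase.mpr ⟨hij, Finset.mem_univ i⟩)
        (if_neg hi : (if w i = y' i then (1:ℂ) else 0) = 0)
    rw [hC, hz]
    ring
  rw [← Finset.sum_subset (Finset.subset_univ _) hout, himg]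
  apply Finset.sum_congr rfl
  intro z _
  congr 1
  rw [hC]
  have h1 : Function.update y' j z j = z := by simp
  rw [h1]
  have h2 : ∏ i ∈ Finset.univ.erase j,
      (if Function.update y' j z i = y' i then (1:ℂ) else 0) = 1 := by
    apply Finset.prod_eq_one
    intro i hi
    rw [Function.update_of_ne (Finset.mem_erase.mp hi).1, if_pos rfl]
  rw [h2, mul_one]

lemma big_sum_left (j : Fin N) (c : Matrix (Fin (d j)) (Fin (d j)) ℂ)
    (C : Matrix ((i : Fin N) → Fin (d i)) ((i : Fin N) → Fin (d i)) ℂ)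
    (hC : ∀ x y, C x y = c (x j) (y j) *
      ∏ i ∈ Finset.univ.erase j, (if x i = y i then (1:ℂ) else 0))
    (g : ((i : Fin N) → Fin (d i)) → ℂ) (x' : (i : Fin N) → Fin (d i)) :
    ∑ w, C x' w * g w = ∑ z, c (x' j) z * g (Function.update x' j z) := by
  classical
  have hinj : Function.Injective (fun z : Fin (d j) => Function.update x' j z) := by
    intro z1 z2 h
    have := congrFun h j
    simpa using this
  have himg : ∑ w ∈ Finset.univ.image (fun z : Fin (d j) => Function.update x' j z),
      C x' w * g w = ∑ z, C x' (Function.update x' j z) * g (Function.update x' j z) :=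
    Finset.sum_image (fun z1 _ z2 _ h => hinj h)
  have hout : ∀ w ∈ (Finset.univ : Finset ((i : Fin N) → Fin (d i))),
      w ∉ Finset.univ.image (fun z : Fin (d j) => Function.update x' j z) →
      C x' w * g w = 0 := by
    intro w _ hw
    have : ∃ i, i ≠ j ∧ x' i ≠ w i := by
      by_contra hc
      push_neg at hc
      exact hw (Finset.mem_image.mpr ⟨w j, Finset.mem_univ _, by
        funext i
        by_cases hij : i = j
        · subst hij; simp
        · rw [Function.update_of_ne hij]; exact hc i hij⟩)
    obtain ⟨i, hij, hi⟩ := this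
    have hz : (∏ i ∈ Finset.univ.erase j, if x' i = w i then (1:ℂ) else 0) = 0 :=
      Finset.prod_eq_zero (Finset.mem_erase.mpr ⟨hij, Finset.mem_univ i⟩)
        (if_neg hi : (if x' i = w i then (1:ℂ) else 0) = 0)
    rw [hC, hz]
    ring
  rw [← Finset.sum_subset (Finset.subset_univ _) hout, himg]
  apply Finset.sum_congr rfl
  intro z _
  congr 1
  rw [hC]
  have h1 : Function.update x' j z j = z := by simp
  rw [h1]
  have h2 : ∏ i ∈ Finset.univ.erase j,
      (if x' i = Function.update x' j z i then (1:ℂ) else 0) = 1 := by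
    apply Finset.prod_eq_one
    intro i hi
    rw [Function.update_of_ne (Finset.mem_erase.mp hi).1, if_pos rfl]
  rw [h2, mul_one]

lemma tensor_block_commute (j : Fin N)
    (c : Matrix (Fin (d j)) (Fin (d j)) ℂ)
    (C Y : Matrix ((i : Fin N) → Fin (d i)) ((i : Fin N) → Fin (d i)) ℂ)
    (hC : ∀ x y, C x y = c (x j) (y j) *
      ∏ i ∈ Finset.univ.erase j, (if x i = y i then (1:ℂ) else 0))
    (hYC : Y * C = C * Y) (x y : (i : Fin N) → Fin (d i)) :
    (Matrix.of fun a b => Y (Function.update x j a) (Function.update y j b)) * c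
      = c * (Matrix.of fun a b => Y (Function.update x j a) (Function.update y j b)) := by
  classical
  ext a b
  rw [Matrix.mul_apply, Matrix.mul_apply]
  have h := congrFun (congrFun hYC (Function.update x j a)) (Function.update y j b)
  rw [Matrix.mul_apply, Matrix.mul_apply] at h
  rw [big_sum_right j c C hC (fun w => Y (Function.update x j a) w) (Function.update y j b),
    big_sum_left j c C hC (fun w => Y w (Function.update y j b)) (Function.update x j a)] at h
  simp only [Function.update_self, Function.update_idem] at h
  simp only [Matrix.of_apply]
  exact h
end

section
variable {N : ℕ} {d : Fin N → ℕ}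

theorem theorem_two_commutant_trivial' (hN : 1 ≤ N)
    (hd : ∀ i, 1 ≤ d i)
    {I : Type*} [Fintype I]
    (H : Matrix ((i : Fin N) → Fin (d i)) ((i : Fin N) → Fin (d i)) ℂ)
    (hH : H.IsHermitian)
    (B : I → Matrix ((i : Fin N) → Fin (d i)) ((i : Fin N) → Fin (d i)) ℂ)
    (Bbar : ∀ j : Fin N, Matrix (Fin (d j)) (Fin (d j)) ℂ)
    (hBbar : ∀ j, IsLadder (Bbar j))
    (Bbig : ∀ _ : Fin N,
      Matrix ((i : Fin N) → Fin (d i)) ((i : Fin N) → Fin (d i)) ℂ)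
    (hBbig : ∀ (j : Fin N) (x y : (i : Fin N) → Fin (d i)),
      Bbig j x y = Bbar j (x j) (y j) *
        ∏ i ∈ Finset.univ.erase j, (if x i = y i then (1 : ℂ) else 0))
    (α₀ : Fin N → ℂ) (α β : I → Fin N → ℂ)
    (U : Matrix ((i : Fin N) → Fin (d i)) ((i : Fin N) → Fin (d i)) ℂ)
    (hU : U * Uᴴ = 1 ∧ Uᴴ * U = 1)
    (hM : ∀ j : Fin N,
      U * (α₀ j • H + ∑ i, (α i j • B i + β i j • (B i)ᴴ)) * Uᴴ = Bbig j ∨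
      U * (α₀ j • H + ∑ i, (α i j • B i + β i j • (B i)ᴴ)) * Uᴴ = (Bbig j)ᴴ)
    (X : Matrix ((i : Fin N) → Fin (d i)) ((i : Fin N) → Fin (d i)) ℂ)
    (hXH : X * H = H * X)
    (hXB : ∀ i, X * B i = B i * X)
    (hXBd : ∀ i, X * (B i)ᴴ = (B i)ᴴ * X) :
    ∃ c : ℂ,
      X = c • (1 : Matrix ((i : Fin N) → Fin (d i)) ((i : Fin N) → Fin (d i)) ℂ) := by
  classical
  set M : Fin N → Matrix ((i : Fin N) → Fin (d i)) ((i : Fin N) → Fin (d i)) ℂ :=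
    fun j => α₀ j • H + ∑ i, (α i j • B i + β i j • (B i)ᴴ) with hMdef
  -- X commutes with each M j and (M j)ᴴ
  have hXM : ∀ j, X * M j = M j * X := by
    intro j
    simp only [hMdef, mul_add, add_mul, Finset.mul_sum, Finset.sum_mul,
      Matrix.mul_smul, Matrix.smul_mul, hXH, hXB, hXBd]
  have hMH : ∀ j, (M j)ᴴ =
      star (α₀ j) • H + ∑ i, (star (α i j) • (B i)ᴴ + star (β i j) • B i) := by
    intro j
    simp only [hMdef, Matrix.conjTranspose_add, Matrix.conjTranspose_smul,
      Matrix.conjTranspose_sum, Matrix.conjTranspose_conjTranspose, hH.eq]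
  have hXMH : ∀ j, X * (M j)ᴴ = (M j)ᴴ * X := by
    intro j
    rw [hMH j]
    simp only [mul_add, add_mul, Finset.mul_sum, Finset.sum_mul,
      Matrix.mul_smul, Matrix.smul_mul, hXH, hXB, hXBd]
  set Y := U * X * Uᴴ with hYdef
  have hU2' : ∀ W, Uᴴ * (U * W) = W := fun W => by
    rw [← Matrix.mul_assoc, hU.2, Matrix.one_mul]
  have hYcomm : ∀ W, X * W = W * X → Y * (U * W * Uᴴ) = (U * W * Uᴴ) * Y := by
    intro W hW
    have e1 : Y * (U * W * Uᴴ) = U * (X * W) * Uᴴ := by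
      simp only [hYdef, Matrix.mul_assoc, hU2']
    have e2 : (U * W * Uᴴ) * Y = U * (W * X) * Uᴴ := by
      simp only [hYdef, Matrix.mul_assoc, hU2']
    rw [e1, e2, hW]
  have hUMH : ∀ j, (U * M j * Uᴴ)ᴴ = U * (M j)ᴴ * Uᴴ := by
    intro j
    simp only [Matrix.conjTranspose_mul, Matrix.conjTranspose_conjTranspose,
      Matrix.mul_assoc]
  have hYB : ∀ j, Y * Bbig j = Bbig j * Y ∧ Y * (Bbig j)ᴴ = (Bbig j)ᴴ * Y := by
    intro j
    rcases hM j with h | h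
    · constructor
      · rw [← h]; exact hYcomm _ (hXM j)
      · rw [← h, hUMH j]; exact hYcomm _ (hXMH j)
    · constructor
      · have : (Bbig j) = (U * (M j) * Uᴴ)ᴴ := by rw [h, Matrix.conjTranspose_conjTranspose]
        rw [this, hUMH j]; exact hYcomm _ (hXMH j)
      · rw [← h]; exact hYcomm _ (hXM j)
  -- conjTranspose of the big ladder has the same tensor structure
  have hBbigH : ∀ (j : Fin N) (x y : (i : Fin N) → Fin (d i)),
      (Bbig j)ᴴ x y = (Bbar j)ᴴ (x j) (y j) *
        ∏ i ∈ Finset.univ.erase j, (if x i = y i then (1 : ℂ) else 0) := by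
    intro j x y
    rw [Matrix.conjTranspose_apply, hBbig j y x, star_mul']
    congr 1
    rw [star_prod]
    exact Finset.prod_congr rfl fun i _ => by
      by_cases h : x i = y i
      · rw [if_pos h.symm, if_pos h, star_one]
      · rw [if_neg (fun hc => h hc.symm), if_neg h, star_zero]
  -- block structure of Y
  have hblock : ∀ (j : Fin N) (x y : (i : Fin N) → Fin (d i)), ∃ c : ℂ,
      ∀ a b, Y (Function.update x j a) (Function.update y j b) =
        if a = b then c else 0 := by
    intro j x y
    have h1 := tensor_block_commute j (Bbar j) (Bbig j) Y (hBbig j) (hYB j).1 x y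
    have h2 := tensor_block_commute j (Bbar j)ᴴ (Bbig j)ᴴ Y (hBbigH j) (hYB j).2 x y
    obtain ⟨c, hc⟩ := ladder_commutant (Bbar j) (hBbar j) _ h1 h2
    refine ⟨c, fun a b => ?_⟩
    have := congrFun (congrFun hc a) b
    simp only [Matrix.of_apply, Matrix.smul_apply, Matrix.one_apply, smul_eq_mul] at this
    rw [this]
    by_cases hab : a = b
    · rw [if_pos hab, if_pos hab, mul_one]
    · rw [if_neg hab, if_neg hab, mul_zero]
  -- off-diagonal entries of Y vanish
  have hoff : ∀ x y, x ≠ y → Y x y = 0 := by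
    intro x y hxy
    obtain ⟨j, hj⟩ := Function.ne_iff.mp hxy
    obtain ⟨c, hc⟩ := hblock j x y
    have := hc (x j) (y j)
    rw [Function.update_eq_self, Function.update_eq_self, if_neg hj] at this
    exact this
  -- diagonal entries of Y are constant
  have hdiag : ∀ x (j : Fin N) (a : Fin (d j)),
      Y (Function.update x j a) (Function.update x j a) = Y x x := by
    intro x j a
    obtain ⟨c, hc⟩ := hblock j x x
    have h1 := hc a a
    have h2 := hc (x j) (x j)
    rw [Function.update_eq_self] at h2
    rw [if_pos rfl] at h1 h2
    rw [h1, h2]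
  have hconst : ∀ x y, Y x x = Y y y := by
    have key : ∀ s : Finset (Fin N), ∀ x y : (i : Fin N) → Fin (d i),
        (∀ i ∉ s, x i = y i) → Y x x = Y y y := by
      intro s
      induction s using Finset.induction_on with
      | empty =>
        intro x y h
        have : x = y := funext fun i => h i (by simp)
        rw [this]
      | insert a s hj ih =>
        intro x y h
        have h1 : Y x x = Y (Function.update x a (y a)) (Function.update x a (y a)) :=
          (hdiag x a (y a)).symm
        have h2 : Y (Function.update x a (y a)) (Function.update x a (y a)) = Y y y := by
          apply ih
          intro i hi
          by_cases hia : i = a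
          · subst hia; simp
          · rw [Function.update_of_ne hia]
            exact h i (by simp [hia, hi])
        rw [h1, h2]
    intro x y
    exact key Finset.univ x y (fun i hi => absurd (Finset.mem_univ i) hi)
  set z : (i : Fin N) → Fin (d i) := fun i => ⟨0, hd i⟩ with hzdef
  obtain ⟨c0, hY⟩ : ∃ c0 : ℂ,
      Y = c0 • (1 : Matrix ((i : Fin N) → Fin (d i)) ((i : Fin N) → Fin (d i)) ℂ) := by
    refine ⟨Y z z, ?_⟩
    ext x y
    rw [Matrix.smul_apply, Matrix.one_apply]
    by_cases hxy : x = y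
    · subst hxy
      rw [if_pos rfl, smul_eq_mul, mul_one]
      exact hconst x z
    · rw [if_neg hxy, smul_eq_mul, mul_zero]
      exact hoff x y hxy
  have hX : X = Uᴴ * Y * U := by
    rw [hYdef]
    calc X = (Uᴴ * U) * X * (Uᴴ * U) := by rw [hU.2, Matrix.one_mul, Matrix.mul_one]
    _ = Uᴴ * (U * X * Uᴴ) * U := by simp only [Matrix.mul_assoc]
  refine ⟨c0, ?_⟩
  rw [hX, hY, Matrix.mul_smul, Matrix.smul_mul, Matrix.mul_one, hU.2]
end

/-- Commutant-triviality content of Theorem 2: on a tensor product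
`ℂ^{d₁} ⊗ ⋯ ⊗ ℂ^{d_N}` (matrices indexed by multi-indices), if for each `j` some
complex linear combination `M_j = α₀ⱼ H + Σᵢ (αᵢⱼ Bᵢ + βᵢⱼ Bᵢ†)` is carried by a single
unitary `U` onto `B̄⁽ᴺ⁾_j` or onto `(B̄⁽ᴺ⁾_j)†` — where `B̄⁽ᴺ⁾_j` acts as a ladder matrix
`B̄_j` on the `j`-th factor and as the identity on the other factors — then the
commutant `{H, Bᵢ, Bᵢ† : i ∈ I}'` is trivial. -/
theorem theorem_two_commutant_trivial {N : ℕ} (hN : 1 ≤ N)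
    (d : Fin N → ℕ) (hd : ∀ i, 1 ≤ d i)
    {I : Type*} [Fintype I]
    (H : Matrix ((i : Fin N) → Fin (d i)) ((i : Fin N) → Fin (d i)) ℂ)
    (hH : H.IsHermitian)
    (B : I → Matrix ((i : Fin N) → Fin (d i)) ((i : Fin N) → Fin (d i)) ℂ)
    (Bbar : ∀ j : Fin N, Matrix (Fin (d j)) (Fin (d j)) ℂ)
    (hBbar : ∀ j, IsLadder (Bbar j))
    (Bbig : ∀ _ : Fin N,
      Matrix ((i : Fin N) → Fin (d i)) ((i : Fin N) → Fin (d i)) ℂ)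
    (hBbig : ∀ (j : Fin N) (x y : (i : Fin N) → Fin (d i)),
      Bbig j x y = Bbar j (x j) (y j) *
        ∏ i ∈ Finset.univ.erase j, (if x i = y i then (1 : ℂ) else 0))
    (α₀ : Fin N → ℂ) (α β : I → Fin N → ℂ)
    (U : Matrix ((i : Fin N) → Fin (d i)) ((i : Fin N) → Fin (d i)) ℂ)
    (hU : U * Uᴴ = 1 ∧ Uᴴ * U = 1)
    (hM : ∀ j : Fin N,
      U * (α₀ j • H + ∑ i, (α i j • B i + β i j • (B i)ᴴ)) * Uᴴ = Bbig j ∨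
      U * (α₀ j • H + ∑ i, (α i j • B i + β i j • (B i)ᴴ)) * Uᴴ = (Bbig j)ᴴ)
    (X : Matrix ((i : Fin N) → Fin (d i)) ((i : Fin N) → Fin (d i)) ℂ)
    (hXH : X * H = H * X)
    (hXB : ∀ i, X * B i = B i * X)
    (hXBd : ∀ i, X * (B i)ᴴ = (B i)ᴴ * X) :
    ∃ c : ℂ,
      X = c • (1 : Matrix ((i : Fin N) → Fin (d i)) ((i : Fin N) → Fin (d i)) ℂ) := by
  exact theorem_two_commutant_trivial' hN hd H hH B Bbar hBbar Bbig hBbig α₀ α β U hU hM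
    X hXH hXB hXBd
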